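/- Call a monomial x^r y^s ∂-positive if r > s, and a polynomial ∂-positive if it is a K-linear combination of ∂-positive monomials. Then the divided difference operator ∂ restricts to a bijection from the K-subspace of ∂-positive polynomials in K[x,y] onto the subspace of symmetric polynomials in K[x,y]. -/

import Mathlib

open MvPolynomial

/-- The automorphism of `K[x,y]` swapping the two variables. -/
noncomputable def s2 {K : Type*} [Field K] :
    MvPolynomial (Fin 2) K →ₐ[K] MvPolynomial (Fin 2) K :=
  rename (Equiv.swap 0 1)

/-- A polynomial in `K[x,y]` is `∂`-positive if all its monomials `x^r y^s`
satisfy `r > s`. -/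
def dPos {K : Type*} [Field K] (f : MvPolynomial (Fin 2) K) : Prop :=
  ∀ m ∈ f.support, m 1 < m 0

def sw (m : Fin 2 →₀ ℕ) : Fin 2 →₀ ℕ := Finsupp.equivMapDomain (Equiv.swap 0 1) m

lemma sw_apply0 (m : Fin 2 →₀ ℕ) : sw m 0 = m 1 := by
  simp [sw, Finsupp.equivMapDomain_apply]

lemma sw_apply1 (m : Fin 2 →₀ ℕ) : sw m 1 = m 0 := by
  simp [sw, Finsupp.equivMapDomain_apply]

lemma sw_sw (m : Fin 2 →₀ ℕ) : sw (sw m) = m := by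
  ext i; fin_cases i <;> simp [sw_apply0, sw_apply1]

lemma coeff_s2 {K : Type*} [Field K] (f : MvPolynomial (Fin 2) K) (m : Fin 2 →₀ ℕ) :
    coeff m (s2 f) = coeff (sw m) f := by
  have h := coeff_rename_mapDomain (Equiv.swap 0 1) (Equiv.injective _) f (sw m)
  rw [show Finsupp.mapDomain (⇑(Equiv.swap (0:Fin 2) 1)) (sw m) = sw (sw m) from
    (Finsupp.equivMapDomain_eq_mapDomain _ _).symm, sw_sw] at h
  exact h

lemma s2_s2 {K : Type*} [Field K] (f : MvPolynomial (Fin 2) K) : s2 (s2 f) = f := by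
  apply MvPolynomial.ext
  intro m
  rw [coeff_s2, coeff_s2, sw_sw]

lemma s2_X_sub {K : Type*} [Field K] :
    s2 ((X 0 - X 1 : MvPolynomial (Fin 2) K)) = X 1 - X 0 := by
  simp [s2]

lemma Xsub_ne {K : Type*} [Field K] : (X 0 - X 1 : MvPolynomial (Fin 2) K) ≠ 0 := by
  intro h
  rw [sub_eq_zero] at h
  have := MvPolynomial.X_injective (R := K) h
  exact (by decide : (0 : Fin 2) ≠ 1) this

lemma coeff_symm {K : Type*} [Field K] {g : MvPolynomial (Fin 2) K} (hg : s2 g = g)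
    (m : Fin 2 →₀ ℕ) : coeff (sw m) g = coeff m g := by
  rw [← coeff_s2, hg]

noncomputable def posPart {K : Type*} [Field K] (h : MvPolynomial (Fin 2) K) :
    MvPolynomial (Fin 2) K := AddMonoidAlgebra.ofCoeff (Finsupp.filter (fun m => m 1 < m 0) (AddMonoidAlgebra.coeff h))

lemma coeff_posPart {K : Type*} [Field K] (h : MvPolynomial (Fin 2) K) (m : Fin 2 →₀ ℕ) :
    coeff m (posPart h) = if m 1 < m 0 then coeff m h else 0 := by
  classical
  show (Finsupp.filter (fun m => m 1 < m 0) (AddMonoidAlgebra.coeff h)) m = _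
  rw [Finsupp.filter_apply]
  rfl

lemma diag_coeff_zero {K : Type*} [Field K] {g : MvPolynomial (Fin 2) K} (hg : s2 g = g)
    (m : Fin 2 →₀ ℕ) (hm : m 0 = m 1) : coeff m ((X 0 - X 1) * g) = 0 := by
  classical
  rw [sub_mul, coeff_sub, coeff_X_mul', coeff_X_mul']
  by_cases h0 : m 0 = 0
  · have h1 : m 1 = 0 := hm ▸ h0
    rw [if_neg, if_neg, sub_zero]
    · simp [Finsupp.mem_support_iff, h1]
    · simp [Finsupp.mem_support_iff, h0]
  · have h1 : m 1 ≠ 0 := hm ▸ h0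
    rw [if_pos, if_pos, sub_eq_zero]
    · have e0 : sw (m - Finsupp.single 0 1) 0 = ((m - Finsupp.single 1 1 : Fin 2 →₀ ℕ)) 0 := by
        rw [sw_apply0]
        simp [Finsupp.tsub_apply, Finsupp.single_apply, hm]
      have e1 : sw (m - Finsupp.single 0 1) 1 = ((m - Finsupp.single 1 1 : Fin 2 →₀ ℕ)) 1 := by
        rw [sw_apply1]
        simp [Finsupp.tsub_apply, Finsupp.single_apply, hm]
      have key : sw (m - Finsupp.single 0 1) = m - Finsupp.single 1 1 := by
        ext i
        fin_cases i
        · exact e0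
        · exact e1
      rw [← key, coeff_symm hg]
    · simpa [Finsupp.mem_support_iff] using h1
    · simpa [Finsupp.mem_support_iff] using h0

/-- The divided difference operator `∂` restricts to a bijection from the
`∂`-positive polynomials onto the symmetric polynomials in `K[x,y]`:
it maps `∂`-positive polynomials to symmetric ones, is injective on them,
and every symmetric polynomial has a `∂`-positive preimage. -/
theorem divided_difference_bijection {K : Type*} [Field K] :
    (∀ f Df : MvPolynomial (Fin 2) K, dPos f →
      (X 0 - X 1) * Df = f - s2 f → s2 Df = Df)
    ∧ (∀ f f' : MvPolynomial (Fin 2) K, dPos f → dPos f' →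
      f - s2 f = f' - s2 f' → f = f')
    ∧ (∀ g : MvPolynomial (Fin 2) K, s2 g = g →
      ∃ f : MvPolynomial (Fin 2) K, dPos f ∧ f - s2 f = (X 0 - X 1) * g) := by
  refine ⟨?_, ?_, ?_⟩
  · intro f Df _ heq
    have h2 := congrArg s2 heq
    rw [map_mul, s2_X_sub, map_sub, s2_s2] at h2
    have h3 : (X 0 - X 1) * s2 Df = (X 0 - X 1) * Df := by
      have h4 : (X 0 - X 1 : MvPolynomial (Fin 2) K) * s2 Df = -((X 1 - X 0) * s2 Df) := by ring
      rw [h4, h2, heq]; ring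
    exact mul_left_cancel₀ Xsub_ne h3
  · intro f f' hf hf' heq
    have hs : s2 (f - f') = f - f' := by
      rw [map_sub]
      linear_combination -heq
    ext m
    by_contra hc
    have key : ∀ d : Fin 2 →₀ ℕ, coeff d (f - f') ≠ 0 → d 1 < d 0 := by
      intro d hd
      by_cases hmf : d ∈ f.support
      · exact hf d hmf
      · apply hf' d
        rw [mem_support_iff] at hmf ⊢
        push_neg at hmf
        intro h
        exact hd (by rw [coeff_sub, hmf, h, sub_zero])
    have hne : coeff m (f - f') ≠ 0 := by rw [coeff_sub]; exact sub_ne_zero.mpr hc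
    have h1 : m 1 < m 0 := key m hne
    have hne2 : coeff (sw m) (f - f') ≠ 0 := by
      rw [← coeff_s2, hs] at *
      exact hne
    have h2 : m 0 < m 1 := by
      have := key (sw m) hne2
      rwa [sw_apply0, sw_apply1] at this
    exact absurd h2 (lt_asymm h1)
  · intro g hg
    refine ⟨posPart ((X 0 - X 1) * g), ?_, ?_⟩
    · intro m hm
      rw [mem_support_iff, coeff_posPart] at hm
      by_contra hc
      rw [if_neg hc] at hm
      exact hm rfl
    · have hanti : s2 ((X 0 - X 1) * g) = -((X 0 - X 1) * g) := by
        rw [map_mul, s2_X_sub, hg]; ring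
      ext m
      rw [coeff_sub, coeff_s2, coeff_posPart, coeff_posPart]
      rcases lt_trichotomy (m 1) (m 0) with h | h | h
      · rw [if_pos h, if_neg (by rw [sw_apply0, sw_apply1]; exact not_lt.mpr h.le), sub_zero]
      · rw [if_neg (by rw [h]; exact lt_irrefl _),
          if_neg (by rw [sw_apply0, sw_apply1, h]; exact lt_irrefl _), sub_zero,
          diag_coeff_zero hg m h.symm]
      · rw [if_neg (not_lt.mpr h.le), if_pos (by rw [sw_apply0, sw_apply1]; exact h), zero_sub]
        have h5 := congrArg (coeff m) hanti
        rw [coeff_neg, coeff_s2] at h5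
        rw [h5, neg_neg]
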